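/- Let M be a finitely generated ℤ_ℓ-module, T ⊆ M its torsion submodule, and σ : M → M an automorphism preserving T. Suppose that the induced automorphism of the torsion-free quotient M/T satisfies: (σ − 1) ⊗ ℚ_ℓ is bijective on (M/T) ⊗ ℚ_ℓ. Then the natural sequence 0 → T/(σ−1)T → M/(σ−1)M → (M/T)/(σ−1)(M/T) → 0 is exact; in particular the map T/(σ−1)T → M/(σ−1)M is injective. -/
import Mathlib


open scoped TensorProduct

section

variable (ℓ : ℕ) [Fact ℓ.Prime] (M : Type*) [AddCommGroup M] [Module ℤ_[ℓ] M]

/-- The endomorphism `σ − 1` of `M`. -/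
noncomputable def dMap (σ : M ≃ₗ[ℤ_[ℓ]] M) : M →ₗ[ℤ_[ℓ]] M :=
  σ.toLinearMap - LinearMap.id

variable (σ : M ≃ₗ[ℤ_[ℓ]] M)
  (hσT : ∀ x ∈ Submodule.torsion ℤ_[ℓ] M, σ x ∈ Submodule.torsion ℤ_[ℓ] M)

/-- The restriction of `σ − 1` to the torsion submodule `T`. -/
noncomputable def dTor :
    ↥(Submodule.torsion ℤ_[ℓ] M) →ₗ[ℤ_[ℓ]] ↥(Submodule.torsion ℤ_[ℓ] M) :=
  (dMap ℓ M σ).restrict (fun x hx => by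
    simpa [dMap] using sub_mem (hσT x hx) hx)

/-- The endomorphism induced by `σ − 1` on the torsion-free quotient `M/T`. -/
noncomputable def dQuot :
    (M ⧸ Submodule.torsion ℤ_[ℓ] M) →ₗ[ℤ_[ℓ]] (M ⧸ Submodule.torsion ℤ_[ℓ] M) :=
  Submodule.mapQ _ _ (dMap ℓ M σ) (fun x hx => by
    simpa [dMap] using sub_mem (hσT x hx) hx)

/-- The natural map `T/(σ−1)T → M/(σ−1)M`. -/
noncomputable def torCoinvToCoinv :
    (↥(Submodule.torsion ℤ_[ℓ] M) ⧸ LinearMap.range (dTor ℓ M σ hσT)) →ₗ[ℤ_[ℓ]]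
      (M ⧸ LinearMap.range (dMap ℓ M σ)) :=
  Submodule.mapQ _ _ (Submodule.torsion ℤ_[ℓ] M).subtype
    (by rintro _ ⟨y, rfl⟩; exact ⟨(y : M), rfl⟩)

/-- The natural map `M/(σ−1)M → (M/T)/(σ−1)(M/T)`. -/
noncomputable def coinvToQuotCoinv :
    (M ⧸ LinearMap.range (dMap ℓ M σ)) →ₗ[ℤ_[ℓ]]
      ((M ⧸ Submodule.torsion ℤ_[ℓ] M) ⧸ LinearMap.range (dQuot ℓ M σ hσT)) :=
  Submodule.mapQ _ _ (Submodule.torsion ℤ_[ℓ] M).mkQ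
    (by
      rintro _ ⟨y, rfl⟩
      exact ⟨(Submodule.torsion ℤ_[ℓ] M).mkQ y, by
        simp [dQuot, Submodule.mapQ_apply, Submodule.mkQ_apply]⟩)

lemma dQuot_injective
    (hbij : Function.Injective (LinearMap.baseChange ℚ_[ℓ] (dQuot ℓ M σ hσT))) :
    Function.Injective (dQuot ℓ M σ hσT) := by
  set N := M ⧸ Submodule.torsion ℤ_[ℓ] M
  have hloc : IsLocalizedModule (nonZeroDivisors ℤ_[ℓ])
      (TensorProduct.mk ℤ_[ℓ] ℚ_[ℓ] N 1) :=
    (isLocalizedModule_iff_isBaseChange (nonZeroDivisors ℤ_[ℓ]) ℚ_[ℓ] _).mpr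
      (TensorProduct.isBaseChange ℤ_[ℓ] N ℚ_[ℓ])
  rw [injective_iff_map_eq_zero]
  intro x hx
  have h1 : (TensorProduct.mk ℤ_[ℓ] ℚ_[ℓ] N 1) x = 0 := by
    apply hbij
    rw [map_zero]
    simpa [TensorProduct.mk_apply] using
      congrArg (fun y => (1 : ℚ_[ℓ]) ⊗ₜ[ℤ_[ℓ]] y) hx
  obtain ⟨s, hs⟩ := (IsLocalizedModule.eq_zero_iff (nonZeroDivisors ℤ_[ℓ]) _).mp h1
  have hs0 : (s : ℤ_[ℓ]) ≠ 0 := nonZeroDivisors.coe_ne_zero s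
  have hs' : (s : ℤ_[ℓ]) • x = 0 := hs
  rcases smul_eq_zero.mp hs' with h | h
  · exact absurd h hs0
  · exact h

/-- Let `M` be a finitely generated `ℤ_ℓ`-module, `T ⊆ M` its torsion submodule, and
`σ : M ≃ M` an automorphism preserving `T`, such that `(σ − 1) ⊗ ℚ_ℓ` is bijective on
`(M/T) ⊗ ℚ_ℓ`.  Then the sequence
`0 → T/(σ−1)T → M/(σ−1)M → (M/T)/(σ−1)(M/T) → 0` is exact; in particular the first map
is injective. -/
theorem stmt_12 [Module.Finite ℤ_[ℓ] M]
    (hbij : Function.Bijective (LinearMap.baseChange ℚ_[ℓ] (dQuot ℓ M σ hσT))) :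
    Function.Injective (torCoinvToCoinv ℓ M σ hσT) ∧
      LinearMap.range (torCoinvToCoinv ℓ M σ hσT) =
        LinearMap.ker (coinvToQuotCoinv ℓ M σ hσT) ∧
      Function.Surjective (coinvToQuotCoinv ℓ M σ hσT) := by
  have hinj := dQuot_injective ℓ M σ hσT hbij.1
  refine ⟨?_, ?_, ?_⟩
  · rw [← LinearMap.ker_eq_bot, eq_bot_iff]
    rintro x hx
    obtain ⟨t, rfl⟩ := Submodule.Quotient.mk_surjective _ x
    have hx' : (Submodule.Quotient.mk ((Submodule.torsion ℤ_[ℓ] M).subtype t) :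
        M ⧸ LinearMap.range (dMap ℓ M σ)) = 0 := by
      simpa [torCoinvToCoinv, Submodule.mapQ_apply] using hx
    rw [Submodule.Quotient.mk_eq_zero] at hx'
    obtain ⟨m, hm⟩ := hx'
    have hmT : m ∈ Submodule.torsion ℤ_[ℓ] M := by
      have h0 : dQuot ℓ M σ hσT (Submodule.Quotient.mk m) = 0 := by
        simp only [dQuot, Submodule.mapQ_apply, hm]
        simpa [Submodule.Quotient.mk_eq_zero] using t.2
      have := (injective_iff_map_eq_zero _).mp hinj _ h0
      simpa [Submodule.Quotient.mk_eq_zero] using this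
    have : t = dTor ℓ M σ hσT ⟨m, hmT⟩ := by
      apply Subtype.ext
      simpa [dTor, LinearMap.restrict_apply] using hm.symm
    simp only [Submodule.mem_bot, Submodule.Quotient.mk_eq_zero, this]
    exact ⟨⟨m, hmT⟩, rfl⟩
  · ext x
    obtain ⟨m, rfl⟩ := Submodule.Quotient.mk_surjective _ x
    simp only [LinearMap.mem_range, LinearMap.mem_ker]
    constructor
    · rintro ⟨y, hy⟩
      obtain ⟨t, rfl⟩ := Submodule.Quotient.mk_surjective _ y
      rw [← hy]
      simp only [torCoinvToCoinv, coinvToQuotCoinv, Submodule.mapQ_apply]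
      rw [Submodule.Quotient.mk_eq_zero]
      have : (Submodule.torsion ℤ_[ℓ] M).mkQ ((Submodule.torsion ℤ_[ℓ] M).subtype t) = 0 := by
        simpa [Submodule.Quotient.mk_eq_zero] using t.2
      rw [this]
      exact Submodule.zero_mem _
    · intro h
      have h' : (Submodule.torsion ℤ_[ℓ] M).mkQ m ∈
          LinearMap.range (dQuot ℓ M σ hσT) := by
        simpa [coinvToQuotCoinv, Submodule.mapQ_apply, Submodule.Quotient.mk_eq_zero] using h
      obtain ⟨y, hy⟩ := h'
      obtain ⟨n, rfl⟩ := Submodule.Quotient.mk_surjective _ y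
      have hy' : (Submodule.torsion ℤ_[ℓ] M).mkQ (dMap ℓ M σ n) =
          (Submodule.torsion ℤ_[ℓ] M).mkQ m := by
        simpa [dQuot, Submodule.mapQ_apply] using hy
      have hT : m - dMap ℓ M σ n ∈ Submodule.torsion ℤ_[ℓ] M := by
        rw [← Submodule.Quotient.mk_eq_zero]
        simp only [Submodule.Quotient.mk_sub]
        rw [sub_eq_zero]
        exact hy'.symm
      refine ⟨Submodule.Quotient.mk ⟨m - dMap ℓ M σ n, hT⟩, ?_⟩
      simp only [torCoinvToCoinv, Submodule.mapQ_apply, Submodule.subtype_apply]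
      rw [Submodule.Quotient.eq]
      have : (⟨m - dMap ℓ M σ n, hT⟩ : Submodule.torsion ℤ_[ℓ] M).1 - m =
          dMap ℓ M σ (-n) := by simp
      rw [this]
      exact ⟨-n, rfl⟩
  · intro y
    obtain ⟨z, rfl⟩ := Submodule.Quotient.mk_surjective _ y
    obtain ⟨m, rfl⟩ := Submodule.Quotient.mk_surjective _ z
    exact ⟨Submodule.Quotient.mk m, by
      simp [coinvToQuotCoinv, Submodule.mapQ_apply, Submodule.mkQ_apply]⟩

end
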